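/- Let f(v) = Q v²/(2a) + (Qρ + ν)v − 2ρaμ⁺(ī − b/(a+b+wv)) with a, Q, w, μ⁺, ρ > 0, ν ≥ 0, ī ∈ (0,1), b = aī/(1−ī). Then f(0) = 0 and f′(v) = Qv/a + Qρ + ν − 2ρμ⁺((1−ī)/ī)·ι(v)²·w, where ι(v) = b/(a+b+wv), is monotone increasing in v; hence f(v) ≥ 0 for all v ≥ 0 if and only if f′(0) ≥ 0, i.e. iff Qρ + ν ≥ 2ρμ⁺(1−ī)ī w. -/

import Mathlib

/-- For `f(v) = Qv²/(2a) + (Qρ+ν)v − 2ρaμ⁺(ibar − b/(a+b+wv))`: `f(0) = 0`, the derivative is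
`f′(v) = Qv/a + Qρ + ν − 2ρμ⁺((1−ibar)/ibar)ι(v)²w` which is monotone on `[0,∞)`, and `f ≥ 0`
on `[0,∞)` iff `f′(0) ≥ 0` iff `Qρ + ν ≥ 2ρμ⁺(1−ibar)ibar w`. -/
theorem stmt_6 (a Q w μp ρ ν ibar b : ℝ)
    (ha : 0 < a) (hQ : 0 < Q) (hw : 0 < w) (hμ : 0 < μp) (hρ : 0 < ρ) (hν : 0 ≤ ν)
    (hibar0 : 0 < ibar) (hibar1 : ibar < 1) (hb : b = a * ibar / (1 - ibar))
    (f f' : ℝ → ℝ)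
    (hf : f = fun v => Q * v ^ 2 / (2 * a) + (Q * ρ + ν) * v
      - 2 * ρ * a * μp * (ibar - b / (a + b + w * v)))
    (hf' : f' = fun v => Q * v / a + Q * ρ + ν
      - 2 * ρ * μp * ((1 - ibar) / ibar) * (b / (a + b + w * v)) ^ 2 * w) :
    f 0 = 0 ∧
    (∀ v ≥ (0 : ℝ), HasDerivAt f (f' v) v) ∧
    MonotoneOn f' (Set.Ici 0) ∧
    ((∀ v ≥ (0 : ℝ), 0 ≤ f v) ↔ 0 ≤ f' 0) ∧
    (0 ≤ f' 0 ↔ 2 * ρ * μp * (1 - ibar) * ibar * w ≤ Q * ρ + ν) := by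
  have h1i : 0 < 1 - ibar := by linarith
  have hb0 : 0 < b := by rw [hb]; positivity
  have hkey : b * (1 - ibar) = a * ibar := by
    rw [hb]; field_simp
  have hab : b / (a + b) = ibar := by
    have : a + b ≠ 0 := by positivity
    field_simp
    nlinarith
  have hden : ∀ v : ℝ, 0 ≤ v → 0 < a + b + w * v := by
    intro v hv; nlinarith
  have hf0 : f 0 = 0 := by simp [hf, hab]
  have hderiv : ∀ v ≥ (0 : ℝ), HasDerivAt f (f' v) v := by
    intro v hv
    have hd := hden v hv
    have hdd : HasDerivAt (fun v : ℝ => a + b + w * v) w v := by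
      simpa using ((hasDerivAt_id v).const_mul w).const_add (a + b)
    have hg : HasDerivAt (fun v : ℝ => b / (a + b + w * v))
        ((0 * (a + b + w * v) - b * w) / (a + b + w * v) ^ 2) v :=
      (hasDerivAt_const v b).div hdd hd.ne'
    have h1 : HasDerivAt (fun v : ℝ => Q * v ^ 2 / (2 * a))
        (Q * (2 * v) / (2 * a)) v := by
      have := ((hasDerivAt_pow 2 v).const_mul Q).div_const (2 * a)
      simpa using this
    have h2 : HasDerivAt (fun v : ℝ => (Q * ρ + ν) * v) (Q * ρ + ν) v := by
      simpa using (hasDerivAt_id v).const_mul (Q * ρ + ν)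
    have h3 : HasDerivAt (fun v : ℝ => 2 * ρ * a * μp * (ibar - b / (a + b + w * v)))
        (2 * ρ * a * μp * (0 - (0 * (a + b + w * v) - b * w) / (a + b + w * v) ^ 2)) v :=
      ((hasDerivAt_const v ibar).sub hg).const_mul (2 * ρ * a * μp)
    have h : HasDerivAt f
        (Q * (2 * v) / (2 * a) + (Q * ρ + ν)
          - 2 * ρ * a * μp * (0 - (0 * (a + b + w * v) - b * w) / (a + b + w * v) ^ 2)) v := by
      rw [hf]; exact (h1.add h2).sub h3
    convert h using 1
    have hib : (1 - ibar) / ibar * b = a := by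
      field_simp
      linarith [hkey]
    have e1 : ((1 - ibar) / ibar) * (b / (a + b + w * v)) ^ 2
        = a * b / (a + b + w * v) ^ 2 := by
      rw [div_pow, ← hib]; ring
    rw [hf']
    simp only []
    rw [mul_assoc (2 * ρ * μp), e1]
    field_simp
    ring
  have hmono' : MonotoneOn f' (Set.Ici 0) := by
    intro x hx y hy hxy
    simp only [Set.mem_Ici] at hx hy
    have hdx := hden x hx
    have hdy := hden y hy
    have hle : b / (a + b + w * y) ≤ b / (a + b + w * x) := by
      apply div_le_div_of_nonneg_left hb0.le hdx
      nlinarith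
    have hy0 : 0 < b / (a + b + w * y) := by positivity
    have hsq : (b / (a + b + w * y)) ^ 2 ≤ (b / (a + b + w * x)) ^ 2 := by
      nlinarith
    have hc : 0 ≤ 2 * ρ * μp * ((1 - ibar) / ibar) * w := by positivity
    rw [hf']
    simp only
    have hx' : Q * x / a ≤ Q * y / a := by gcongr
    nlinarith [mul_le_mul_of_nonneg_left hsq hc]
  have hf'0 : f' 0 = Q * ρ + ν - 2 * ρ * μp * (1 - ibar) * ibar * w := by
    rw [hf']
    have h2 : (1 - ibar) / ibar * ibar ^ 2 = (1 - ibar) * ibar := by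
      field_simp
    simp only []
    rw [show a + b + w * 0 = a + b by ring, hab]
    linear_combination (-(2 * ρ * μp * w)) * h2
  refine ⟨hf0, hderiv, hmono', ?_, by rw [hf'0]; constructor <;> intro h <;> linarith⟩
  constructor
  · intro hpos
    by_contra hneg
    push_neg at hneg
    have ht : Filter.Tendsto (slope f 0) (nhdsWithin 0 (Set.Ioi 0)) (nhds (f' 0)) :=
      ((hasDerivAt_iff_tendsto_slope.mp (hderiv 0 le_rfl)).mono_left
        (nhdsWithin_mono 0 (fun x hx => ne_of_gt hx)))
    have : 0 ≤ f' 0 := by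
      refine ge_of_tendsto ht ?_
      filter_upwards [self_mem_nhdsWithin] with x hx
      have hx0 : (0:ℝ) < x := hx
      have := hpos x hx0.le
      rw [slope_def_field, hf0]
      apply div_nonneg <;> simp [this, hx0.le]
    linarith
  · intro h0
    intro v hv
    have hnn : ∀ x ∈ Set.Ici (0:ℝ), 0 ≤ f' x := fun x hx =>
      le_trans h0 (hmono' (Set.self_mem_Ici) hx hx)
    have hmf : MonotoneOn f (Set.Ici 0) := by
      apply monotoneOn_of_deriv_nonneg (convex_Ici 0)
      · exact fun x hx => (hderiv x hx).continuousAt.continuousWithinAt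
      · intro x hx
        rw [interior_Ici] at hx
        exact (hderiv x hx.le).differentiableAt.differentiableWithinAt
      · intro x hx
        rw [interior_Ici] at hx
        rw [(hderiv x hx.le).deriv]
        exact hnn x (Set.mem_Ici.mpr (le_of_lt hx))
    have := hmf Set.self_mem_Ici hv hv
    rwa [hf0] at this
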